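/- Let H be a real Hilbert space and J : H → ℝ ∪ {+∞} be a proper, convex, lower semi-continuous, absolutely one-homogeneous functional such that for every t ∈ ℝ the sublevel set {u ∈ H : ‖u‖ + J(u) ≤ t} is compact. Let (u^k) ⊂ N(J)^⊥ be a sequence converging (in norm) to u* ∈ H, let α_k > 0 with α_k → α* > 0, and set v^k = prox_{α_k}^J(u^k). Then (v^k) converges in norm to some v* ∈ H, and v* = prox_{α*}^J(u*). -/
import Mathlib


open scoped RealInnerProductSpace

noncomputable section

variable {H : Type*} [NormedAddCommGroup H] [InnerProductSpace ℝ H] [CompleteSpace H]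

/-- `J` is absolutely one-homogeneous: `J (c • u) = |c| * J u` for `c ≠ 0`, and `J 0 = 0`. -/
def AbsOneHom (J : H → EReal) : Prop :=
  J 0 = 0 ∧ ∀ c : ℝ, c ≠ 0 → ∀ u : H, J (c • u) = ((|c| : ℝ) : EReal) * J u

/-- Convexity of an extended-real-valued functional. -/
def ConvexFn (J : H → EReal) : Prop :=
  ∀ x y : H, ∀ t : ℝ, 0 ≤ t → t ≤ 1 →
    J (t • x + (1 - t) • y) ≤ ((t : ℝ) : EReal) * J x + (((1 - t) : ℝ) : EReal) * J y

/-- `J` is proper: it never takes the value `⊥` and is not identically `⊤`. -/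
def ProperFn (J : H → EReal) : Prop := (∀ u : H, J u ≠ ⊥) ∧ ∃ u : H, J u ≠ ⊤

/-- `u` is orthogonal to the null space `N(J) = {n : J n = 0}` of `J`. -/
def InNullPerp (J : H → EReal) (u : H) : Prop := ∀ n : H, J n = 0 → ⟪u, n⟫ = 0

/-- The objective `v ↦ ½‖v - u‖² + α J(v)` of the proximal problem for `J`. -/
def ProxObj (J : H → EReal) (α : ℝ) (u v : H) : EReal :=
  (((2 : ℝ)⁻¹ * ‖v - u‖ ^ 2 : ℝ) : EReal) + (α : EReal) * J v

/-- `v` is a minimizer of `w ↦ ½‖w - u‖² + α J(w)`, i.e. `v = prox_α^J(u)`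
(the minimizer is unique by strict convexity). -/
def IsProxPt (J : H → EReal) (α : ℝ) (u v : H) : Prop :=
  ∀ w : H, ProxObj J α u v ≤ ProxObj J α u w

/-- The dual quantity `J_*(u) = sup { ⟪u,p⟫ / J(p) : p ∈ N(J)^⊥, J(p) > 0 }`. -/
def Jdual (J : H → EReal) (u : H) : EReal :=
  ⨆ p : {p : H // InNullPerp J p ∧ 0 < J p}, ((⟪u, (p : H)⟫ : ℝ) : EReal) / J (p : H)

/-- `p` belongs to the subdifferential `∂J(u)`. -/
def InSubdiff (J : H → EReal) (u p : H) : Prop :=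
  ∀ v : H, J u + ((⟪p, v - u⟫ : ℝ) : EReal) ≤ J v

lemma ereal_rep {x : EReal} {c : ℝ} (hb : x ≠ ⊥) (hc : x ≤ (c : EReal)) :
    ∃ m : ℝ, x = (m : EReal) ∧ m ≤ c := by
  have ht : x ≠ ⊤ := by
    intro h; rw [h] at hc; exact (EReal.coe_lt_top c).not_ge hc
  refine ⟨x.toReal, (x.coe_toReal ht hb).symm, ?_⟩
  rw [(x.coe_toReal ht hb).symm] at hc
  exact_mod_cast hc

lemma J_nonneg (J : H → EReal) (hproper : ProperFn J) (hconv : ConvexFn J)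
    (hhom : AbsOneHom J) (u : H) : 0 ≤ J u := by
  have hneg : J (-u) = J u := by
    have h := hhom.2 (-1) (by norm_num) u
    norm_num at h
    exact h
  have h := hconv u (-u) (1/2) (by norm_num) (by norm_num)
  have hz : (1/2 : ℝ) • u + (1 - 1/2 : ℝ) • (-u) = 0 := by
    norm_num
  rw [hz, hhom.1, hneg] at h
  rcases eq_or_ne (J u) ⊤ with ht | ht
  · rw [ht]; exact le_top
  · obtain ⟨m, hm, -⟩ := ereal_rep (hproper.1 u) (le_of_eq ((J u).coe_toReal ht (hproper.1 u)).symm)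
    rw [hm] at h ⊢
    have h' : (0:ℝ) ≤ (1/2)*m + (1-1/2)*m := by exact_mod_cast h
    have : (0:ℝ) ≤ m := by linarith
    exact_mod_cast this

lemma basic_bound (J : H → EReal) (hproper : ProperFn J) (hconv : ConvexFn J)
    (hhom : AbsOneHom J) {α : ℝ} {u v : H} (hα : 0 < α) (hv : IsProxPt J α u v) :
    ∃ j : ℝ, J v = (j : EReal) ∧ 0 ≤ j ∧
      (2:ℝ)⁻¹ * ‖v - u‖ ^ 2 + α * j ≤ (2:ℝ)⁻¹ * ‖u‖ ^ 2 := by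
  have h0 := hv 0
  rw [ProxObj, ProxObj, hhom.1, mul_zero, add_zero, zero_sub, norm_neg] at h0
  have hge := J_nonneg J hproper hconv hhom v
  have hJv : J v ≠ ⊤ := by
    intro h
    rw [h, EReal.coe_mul_top_of_pos hα, EReal.add_top_of_ne_bot (EReal.coe_ne_bot _)] at h0
    exact (EReal.coe_lt_top _).not_ge h0
  obtain ⟨j, hj, -⟩ := ereal_rep (hproper.1 v) (le_of_eq ((J v).coe_toReal hJv (hproper.1 v)).symm)
  refine ⟨j, hj, ?_, ?_⟩
  · rw [hj] at hge; exact_mod_cast hge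
  · rw [hj] at h0; exact_mod_cast h0

lemma var_ineq (J : H → EReal) (hproper : ProperFn J) (hconv : ConvexFn J)
    {α : ℝ} (hα : 0 < α) {u v w : H} (hv : IsProxPt J α u v)
    {j r : ℝ} (hj : J v = (j : EReal)) (hr : J w = (r : EReal)) :
    α * (j - r) ≤ ⟪v - u, w - v⟫ := by
  have key : ∀ t : ℝ, 0 < t → t ≤ 1 →
      α * (j - r) ≤ ⟪v - u, w - v⟫ + 2⁻¹ * t * ‖w - v‖ ^ 2 := by
    intro t ht ht1
    have hconv' := hconv w v t ht.le ht1
    rw [hr, hj] at hconv'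
    have hcoe : ((t : ℝ) : EReal) * ((r : ℝ) : EReal) + (((1 - t) : ℝ) : EReal) * ((j : ℝ) : EReal)
        = ((t * r + (1 - t) * j : ℝ) : EReal) := by norm_cast
    rw [hcoe] at hconv'
    obtain ⟨m, hm, hmle⟩ := ereal_rep (hproper.1 _) hconv'
    have hopt := hv (t • w + (1 - t) • v)
    rw [ProxObj, ProxObj, hj, hm] at hopt
    have hopt' : (2:ℝ)⁻¹ * ‖v - u‖ ^ 2 + α * j
        ≤ (2:ℝ)⁻¹ * ‖t • w + (1 - t) • v - u‖ ^ 2 + α * m := by exact_mod_cast hopt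
    have hmid : t • w + (1 - t) • v - u = (v - u) + t • (w - v) := by module
    have hnorm : ‖t • w + (1 - t) • v - u‖ ^ 2
        = ‖v - u‖ ^ 2 + 2 * (t * ⟪v - u, w - v⟫) + t ^ 2 * ‖w - v‖ ^ 2 := by
      rw [hmid, norm_add_sq_real, real_inner_smul_right, norm_smul, Real.norm_eq_abs,
        mul_pow, sq_abs]
    rw [hnorm] at hopt'
    have hαm : α * m ≤ α * (t * r + (1 - t) * j) := mul_le_mul_of_nonneg_left hmle hα.le
    have h1 : 0 ≤ t * (⟪v - u, w - v⟫ + 2⁻¹ * t * ‖w - v‖ ^ 2 + α * (r - j)) := by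
      nlinarith [hopt', hαm]
    have h2 : 0 ≤ ⟪v - u, w - v⟫ + 2⁻¹ * t * ‖w - v‖ ^ 2 + α * (r - j) := by
      by_contra hc
      push_neg at hc
      exact absurd h1 (not_le.mpr (mul_neg_of_pos_of_neg ht hc))
    linarith
  refine le_of_forall_pos_le_add ?_
  intro ε hε
  set D : ℝ := 2⁻¹ * ‖w - v‖ ^ 2 with hD
  have hD0 : 0 ≤ D := by positivity
  set t : ℝ := min 1 (ε / (D + 1)) with htdef
  have ht0 : 0 < t := lt_min one_pos (by positivity)
  have ht1 : t ≤ 1 := min_le_left _ _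
  have hk := key t ht0 ht1
  have htle : t ≤ ε / (D + 1) := min_le_right _ _
  have h3 : t * (D + 1) ≤ ε := by
    rw [← div_mul_cancel₀ ε (show (D:ℝ) + 1 ≠ 0 by positivity)]
    exact mul_le_mul_of_nonneg_right htle (by positivity)
  have h4 : 2⁻¹ * t * ‖w - v‖ ^ 2 = t * D := by rw [hD]; ring
  rw [h4] at hk
  nlinarith [hk, h3, ht0]

/-- **Continuity of the proximal operator along convergent sequences.**
Let `J` be proper, convex, lsc, absolutely one-homogeneous, with compact
sublevel sets of `‖·‖ + J(·)`. If `(u^k) ⊆ N(J)^⊥` converges to `u*`,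
`α_k > 0` with `α_k → α* > 0`, and `v^k = prox_{α_k}^J(u^k)`, then `(v^k)`
converges in norm to some `v*` and `v* = prox_{α*}^J(u*)`. -/
theorem prox_continuity
    (J : H → EReal) (hproper : ProperFn J) (hconv : ConvexFn J)
    (hlsc : LowerSemicontinuous J) (hhom : AbsOneHom J)
    (hcompact : ∀ t : ℝ, IsCompact {u : H | ((‖u‖ : ℝ) : EReal) + J u ≤ (t : EReal)})
    (useq : ℕ → H) (hperp : ∀ k, InNullPerp J (useq k))
    (ustar : H) (hconv_u : Filter.Tendsto useq Filter.atTop (nhds ustar))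
    (αseq : ℕ → ℝ) (hαpos : ∀ k, 0 < αseq k)
    (αstar : ℝ) (hαstar : 0 < αstar)
    (hconv_α : Filter.Tendsto αseq Filter.atTop (nhds αstar))
    (vseq : ℕ → H) (hv : ∀ k, IsProxPt J (αseq k) (useq k) (vseq k)) :
    ∃ vstar : H, Filter.Tendsto vseq Filter.atTop (nhds vstar) ∧
      IsProxPt J αstar ustar vstar := by
  -- uniform lower bound on αseq
  obtain ⟨N0, hN0⟩ : ∃ N : ℕ, ∀ k ≥ N, αstar / 2 < αseq k := by
    have h := hconv_α.eventually (lt_mem_nhds (show αstar / 2 < αstar by linarith))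
    exact Filter.eventually_atTop.mp h
  obtain ⟨c, hc0, hcle⟩ : ∃ c : ℝ, 0 < c ∧ ∀ k, c ≤ αseq k := by
    have hne : (Finset.range (N0 + 1)).Nonempty := ⟨0, by simp⟩
    refine ⟨min (αstar / 2) ((Finset.range (N0 + 1)).inf' hne αseq), ?_, ?_⟩
    · apply lt_min (by linarith)
      rw [Finset.lt_inf'_iff]
      exact fun i _ => hαpos i
    · intro k
      rcases le_or_gt k N0 with hk | hk
      · exact le_trans (min_le_right _ _)
          (Finset.inf'_le _ (Finset.mem_range.mpr (by omega)))
      · exact le_trans (min_le_left _ _) (hN0 k (by omega)).le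
  -- uniform bound on ‖useq‖
  obtain ⟨R, hR0, hR⟩ : ∃ R : ℝ, 0 ≤ R ∧ ∀ k, ‖useq k‖ ≤ R := by
    obtain ⟨R0, hR0⟩ := hconv_u.norm.bddAbove_range
    refine ⟨max R0 0, le_max_right _ _, fun k => ?_⟩
    exact le_trans (hR0 (Set.mem_range_self k)) (le_max_left _ _)
  -- real values of J (vseq k) with bounds
  choose jseq hJv hjnn hjineq using
    fun k => basic_bound J hproper hconv hhom (hαpos k) (hv k)
  set M : ℝ := R ^ 2 / (2 * c) with hMdef
  have hM0 : 0 ≤ M := by positivity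
  have hjM : ∀ k, jseq k ≤ M := by
    intro k
    have h1 := hjineq k
    have h2 : ‖useq k‖ ^ 2 ≤ R ^ 2 := by nlinarith [hR k, norm_nonneg (useq k)]
    have h3 : c * jseq k ≤ αseq k * jseq k :=
      mul_le_mul_of_nonneg_right (hcle k) (hjnn k)
    rw [hMdef, le_div_iff₀ (by positivity)]
    nlinarith [sq_nonneg ‖vseq k - useq k‖]
  have hvd : ∀ k, ‖vseq k - useq k‖ ≤ R := by
    intro k
    have h1 := hjineq k
    have h2 : ‖useq k‖ ^ 2 ≤ R ^ 2 := by nlinarith [hR k, norm_nonneg (useq k)]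
    have h3 : 0 ≤ αseq k * jseq k := mul_nonneg (hαpos k).le (hjnn k)
    nlinarith [norm_nonneg (vseq k - useq k)]
  have hvnorm : ∀ k, ‖vseq k‖ ≤ 2 * R := by
    intro k
    calc ‖vseq k‖ = ‖(vseq k - useq k) + useq k‖ := by rw [sub_add_cancel]
    _ ≤ ‖vseq k - useq k‖ + ‖useq k‖ := norm_add_le _ _
    _ ≤ 2 * R := by linarith [hvd k, hR k]
  -- key inequality
  have hkey : ∀ m n : ℕ, ‖vseq m - vseq n‖ ^ 2
      ≤ ‖useq m - useq n‖ * (4 * R) + |αseq m - αseq n| * (2 * M) := by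
    intro m n
    have h1 := var_ineq J hproper hconv (hαpos m) (hv m) (hJv m) (hJv n)
    have h2 := var_ineq J hproper hconv (hαpos n) (hv n) (hJv n) (hJv m)
    have hid : ⟪vseq m - useq m, vseq n - vseq m⟫ + ⟪vseq n - useq n, vseq m - vseq n⟫
        = ⟪useq m - useq n, vseq m - vseq n⟫ - ‖vseq m - vseq n‖ ^ 2 := by
      rw [← real_inner_self_eq_norm_sq]
      simp only [inner_sub_left, inner_sub_right]
      rw [real_inner_comm (vseq n) (vseq m)]
      ring
    have hx : ‖vseq m - vseq n‖ ≤ 4 * R := by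
      calc ‖vseq m - vseq n‖ ≤ ‖vseq m‖ + ‖vseq n‖ := norm_sub_le _ _
      _ ≤ 4 * R := by linarith [hvnorm m, hvnorm n]
    have hcs : ⟪useq m - useq n, vseq m - vseq n⟫
        ≤ ‖useq m - useq n‖ * (4 * R) := by
      refine le_trans (real_inner_le_norm _ _) ?_
      exact mul_le_mul_of_nonneg_left hx (norm_nonneg _)
    have habs : (αseq m - αseq n) * (jseq n - jseq m) ≤ |αseq m - αseq n| * (2 * M) := by
      refine le_trans (le_abs_self _) ?_
      rw [abs_mul]
      refine mul_le_mul_of_nonneg_left ?_ (abs_nonneg _)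
      rw [abs_le]
      constructor <;> [linarith [hjM m, hjnn n]; linarith [hjM n, hjnn m]]
    nlinarith [h1, h2, hid, hcs, habs]
  -- Cauchy
  have hcauchy : CauchySeq vseq := by
    rw [Metric.cauchySeq_iff]
    intro ε hε
    set δ : ℝ := ε ^ 2 / (2 * (4 * R + 2 * M + 1)) with hδdef
    have hδ0 : 0 < δ := by positivity
    obtain ⟨N1, hN1⟩ := Metric.cauchySeq_iff.mp hconv_u.cauchySeq δ hδ0
    obtain ⟨N2, hN2⟩ := Metric.cauchySeq_iff.mp hconv_α.cauchySeq δ hδ0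
    refine ⟨max N1 N2, fun m hm n hn => ?_⟩
    have hu := hN1 m (le_trans (le_max_left _ _) hm) n (le_trans (le_max_left _ _) hn)
    have ha := hN2 m (le_trans (le_max_right _ _) hm) n (le_trans (le_max_right _ _) hn)
    rw [dist_eq_norm] at hu ⊢
    rw [Real.dist_eq] at ha
    have hk := hkey m n
    have h5 : ‖vseq m - vseq n‖ ^ 2 < ε ^ 2 := by
      have e1 : ‖useq m - useq n‖ * (4 * R) ≤ δ * (4 * R) :=
        mul_le_mul_of_nonneg_right hu.le (by positivity)
      have e2 : |αseq m - αseq n| * (2 * M) ≤ δ * (2 * M) :=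
        mul_le_mul_of_nonneg_right ha.le (by positivity)
      have e3 : δ * (2 * (4 * R + 2 * M + 1)) = ε ^ 2 := by
        rw [hδdef]; field_simp
      nlinarith [hδ0]
    nlinarith [norm_nonneg (vseq m - vseq n), hε]
  obtain ⟨vstar, hvlim⟩ := cauchySeq_tendsto_of_complete hcauchy
  refine ⟨vstar, hvlim, ?_⟩
  intro w
  have hJvs_le : J vstar ≤ ((M : ℝ) : EReal) := by
    by_contra hgt
    push_neg at hgt
    have hev := hvlim.eventually (hlsc vstar ((M : ℝ) : EReal) hgt)
    obtain ⟨k, hk⟩ := hev.exists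
    rw [hJv k] at hk
    exact absurd (EReal.coe_lt_coe_iff.mp hk) (not_lt.mpr (hjM k))
  obtain ⟨s, hs, hsM⟩ := ereal_rep (hproper.1 vstar) hJvs_le
  by_cases hw : J w = ⊤
  · have htop : ProxObj J αstar ustar w = ⊤ := by
      rw [ProxObj, hw, EReal.coe_mul_top_of_pos hαstar,
        EReal.add_top_of_ne_bot (EReal.coe_ne_bot _)]
    rw [htop]; exact le_top
  · have hwb := hproper.1 w
    set r : ℝ := (J w).toReal with hrdef
    have hw' : J w = (r : EReal) := ((J w).coe_toReal hw hwb).symm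
    rw [ProxObj, ProxObj, hs, hw']
    have hreal : (2:ℝ)⁻¹ * ‖vstar - ustar‖ ^ 2 + αstar * s
        ≤ (2:ℝ)⁻¹ * ‖w - ustar‖ ^ 2 + αstar * r := by
      refine le_of_forall_pos_le_add ?_
      intro ε hε
      set ε' : ℝ := ε / αstar with hε'def
      have hε'0 : 0 < ε' := by positivity
      have hslt : ((s - ε' : ℝ) : EReal) < J vstar := by
        rw [hs]; exact_mod_cast (by linarith : s - ε' < s)
      have hev1 := hvlim.eventually (hlsc vstar _ hslt)
      have hIk : ∀ k, (2:ℝ)⁻¹ * ‖vseq k - useq k‖ ^ 2 + αseq k * jseq k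
          ≤ (2:ℝ)⁻¹ * ‖w - useq k‖ ^ 2 + αseq k * r := by
        intro k
        have h := hv k w
        rw [ProxObj, ProxObj, hJv k, hw'] at h
        exact_mod_cast h
      have hev : ∀ᶠ k in Filter.atTop,
          (2:ℝ)⁻¹ * ‖vseq k - useq k‖ ^ 2 + αseq k * (s - ε')
          ≤ (2:ℝ)⁻¹ * ‖w - useq k‖ ^ 2 + αseq k * r := by
        filter_upwards [hev1] with k hk
        rw [hJv k] at hk
        have hlt : s - ε' < jseq k := by exact_mod_cast hk
        have hmul := mul_le_mul_of_nonneg_left hlt.le (hαpos k).le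
        linarith [hIk k]
      have hlim1 : Filter.Tendsto
          (fun k => (2:ℝ)⁻¹ * ‖vseq k - useq k‖ ^ 2 + αseq k * (s - ε'))
          Filter.atTop (nhds ((2:ℝ)⁻¹ * ‖vstar - ustar‖ ^ 2 + αstar * (s - ε'))) :=
        (((hvlim.sub hconv_u).norm.pow 2).const_mul _).add (hconv_α.mul_const _)
      have hlim2 : Filter.Tendsto
          (fun k => (2:ℝ)⁻¹ * ‖w - useq k‖ ^ 2 + αseq k * r)
          Filter.atTop (nhds ((2:ℝ)⁻¹ * ‖w - ustar‖ ^ 2 + αstar * r)) :=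
        (((tendsto_const_nhds.sub hconv_u).norm.pow 2).const_mul _).add (hconv_α.mul_const _)
      have hle := le_of_tendsto_of_tendsto hlim1 hlim2 hev
      have hcancel : αstar * (s - ε') = αstar * s - ε := by
        rw [hε'def, mul_sub, mul_div_cancel₀ _ hαstar.ne']
      linarith
    exact_mod_cast hreal

end
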